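/- Let n ≥ 2 and let a = (a_1,…,a_n) be a tuple of integers with each a_i ≥ 2. There exists a positive rational number c_a, depending only on a, such that for all t, s ∈ ℂ and every z = (z_1,…,z_n) ∈ ℂ^n satisfying ∂g_a^{t,s}/∂z_j(z) = 0 for all j with 2 ≤ j ≤ n, setting y := g_a^{t,s}(z), one has c_a·(s + t·z_1^{a_1})^{d(−a)} = (z_1 − y)^{μ(−a)}. -/

import Mathlib

open scoped BigOperators

/-- The signed chain polynomial (0-based indices). -/
noncomputable def chainP (n : ℕ) (a : ℕ → ℕ) (z : ℕ → ℂ) : ℂ :=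
  (∑ k ∈ Finset.range (n - 1), (-1 : ℂ) ^ (k + 1) * z k ^ a k * z (k + 1))
    + (-1 : ℂ) ^ n * z (n - 1) ^ a (n - 1)

/-- The Milnor number `μ(a)` (0-based). -/
def muZ (n : ℕ) (a : ℕ → ℕ) : ℤ :=
  ∑ k ∈ Finset.range (n + 1), (-1 : ℤ) ^ k * ∏ i ∈ Finset.Ico k n, (a i : ℤ)

/-- `d(a) = a_1 ⋯ a_n` (0-based). -/
def dd (n : ℕ) (a : ℕ → ℕ) : ℕ := ∏ i ∈ Finset.range n, a i

/-- `g_a^{t,s}(z) = z_1 − s z_2 − t z_1^{a_1} z_2 − p_{−a}(z_2,…,z_n)` (0-based). -/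
noncomputable def gMap (n : ℕ) (a : ℕ → ℕ) (t s : ℂ) (z : ℕ → ℂ) : ℂ :=
  z 0 - s * z 1 - t * z 0 ^ a 0 * z 1
    - chainP (n - 1) (fun i => a (i + 1)) (fun i => z (i + 1))

/-- The complex partial derivative of `f` with respect to the `i`-th coordinate at `z`. -/
noncomputable def pd (f : (ℕ → ℂ) → ℂ) (i : ℕ) (z : ℕ → ℂ) : ℂ :=
  deriv (fun w => f (Function.update z i w)) (z i)

namespace St10
open Finset
variable (m : ℕ) (b : ℕ → ℕ)

def D (k : ℕ) : ℕ := ∏ i ∈ Finset.Ico k m, b i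

/-- tail Milnor number (ℤ-valued). -/


def Mz (k : ℕ) : ℤ := ∑ j ∈ Finset.Ico k (m+1), (-1:ℤ)^(j-k) * ∏ i ∈ Finset.Ico j m, (b i : ℤ)


lemma D_cast (k : ℕ) : ((D m b k : ℤ)) = ∏ i ∈ Finset.Ico k m, (b i : ℤ) := by
  simp [D]


lemma Mz_self : Mz m b m = 1 := by
  simp [Mz, Finset.sum_Ico_eq_sum_range]


lemma Mz_top : Mz m b (m+1) = 0 := by
  simp [Mz]


lemma D_self : D m b m = 1 := by simp [D]


lemma D_rec {k : ℕ} (h : k < m) : D m b k = b k * D m b (k+1) := by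
  rw [D, D, ← Finset.prod_eq_prod_Ico_succ_bot h]


lemma Mz_rec {k : ℕ} (h : k < m) : Mz m b k = (D m b k : ℤ) - Mz m b (k+1) := by
  rw [Mz, Finset.sum_eq_sum_Ico_succ_bot (by omega : k < m + 1)]
  rw [Mz, D_cast]
  have : ∀ j ∈ Finset.Ico (k+1) (m+1), (-1:ℤ)^(j-k) * ∏ i ∈ Finset.Ico j m, (b i : ℤ)
      = -((-1:ℤ)^(j-(k+1)) * ∏ i ∈ Finset.Ico j m, (b i : ℤ)) := by
    intro j hj
    simp only [Finset.mem_Ico] at hj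
    have : j - k = (j - (k+1)) + 1 := by omega
    rw [this, pow_succ]
    ring
  rw [Finset.sum_congr rfl this, Finset.sum_neg_distrib]
  simp only [Nat.sub_self, pow_zero, one_mul, sub_eq_add_neg]


lemma D_pos (hb : ∀ i < m, 1 ≤ b i) (k : ℕ) : 1 ≤ D m b k := by
  rw [D]
  exact Finset.one_le_prod' (fun i hi => hb i (Finset.mem_Ico.mp hi).2)


lemma Mz_bounds (hb : ∀ i < m, 2 ≤ b i) :
    ∀ e k, k + e = m → 1 ≤ Mz m b k ∧ Mz m b k ≤ (D m b k : ℤ) := by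
  intro e
  induction e with
  | zero =>
    intro k hk
    subst hk
    simp [Mz_self, D_self]
  | succ e ih =>
    intro k hk
    have hkm : k < m := by omega
    have ih' := ih (k+1) (by omega)
    have hDp : (1:ℤ) ≤ (D m b (k+1) : ℤ) := by
      exact_mod_cast D_pos m b (fun i hi => by have := hb i hi; omega) (k+1)
    have hbk : (2:ℤ) ≤ (b k : ℤ) := by exact_mod_cast hb k hkm
    have hD : (D m b k : ℤ) = (b k : ℤ) * (D m b (k+1) : ℤ) := by
      rw [D_rec m b hkm]; push_cast; ring
    rw [Mz_rec m b hkm]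
    constructor
    · nlinarith [ih'.1, ih'.2]
    · nlinarith [ih'.1, ih'.2]

/-- natural-number tail Milnor number. -/


def MN (k : ℕ) : ℕ := (Mz m b k).toNat


lemma MN_cast (hb : ∀ i < m, 2 ≤ b i) {k : ℕ} (hk : k ≤ m) : (MN m b k : ℤ) = Mz m b k := by
  have := (Mz_bounds m b hb (m - k) k (by omega)).1
  rw [MN, Int.toNat_of_nonneg (by omega)]


lemma MN_pos (hb : ∀ i < m, 2 ≤ b i) {k : ℕ} (hk : k ≤ m) : 1 ≤ MN m b k := by
  have h1 := (Mz_bounds m b hb (m - k) k (by omega)).1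
  have := MN_cast m b hb hk
  omega


lemma MN_top : MN m b (m+1) = 0 := by unfold MN; rw [Mz_top]; rfl


lemma MN_add (hb : ∀ i < m, 2 ≤ b i) {k : ℕ} (hk : k ≤ m) :
    MN m b k + MN m b (k+1) = D m b k := by
  rcases Nat.lt_or_ge k m with h | h
  · have h1 := MN_cast m b hb (le_of_lt h)
    have h2 := MN_cast m b hb (by omega : k + 1 ≤ m)
    have h3 := Mz_rec m b h
    omega
  · obtain rfl : k = m := by omega
    unfold MN
    rw [Mz_self, Mz_top, D_self]
    rfl

/-- central exponent identity:  `MN k = (b k - 1) * MN (k+1) + b k * MN (k+2)` for `k < m`. -/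


lemma MN_split (hb : ∀ i < m, 2 ≤ b i) {k : ℕ} (hk : k < m) :
    MN m b k = (b k - 1) * MN m b (k+1) + b k * MN m b (k+2) := by
  have h1 := MN_add m b hb (le_of_lt hk)
  have h2 := MN_add m b hb (by omega : k + 1 ≤ m)
  have h3 := D_rec m b hk
  have hbk := hb k hk
  have hb1 : 1 ≤ b k := by omega
  have e : b k * (MN m b (k+1) + MN m b (k+2)) = MN m b k + MN m b (k+1) := by
    rw [h2, ← h3, h1]
  zify [hb1] at e ⊢
  ring_nf at e ⊢
  linarith

/-- the constants in the downward induction; `Cr e` is the constant for level `l = m - e`. -/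


def Cr (m : ℕ) (b : ℕ → ℕ) : ℕ → ℚ
  | 0 => 1
  | (e+1) => ((b (m - (e+1)) : ℚ) ^ (MN m b (m - e))) / Cr m b e


lemma Cr_pos (hm : 1 ≤ m) (hb : ∀ i < m, 2 ≤ b i) : ∀ e, 0 < Cr m b e := by
  intro e
  induction e with
  | zero => norm_num [Cr]
  | succ e ih =>
    rw [Cr]
    apply div_pos _ ih
    apply pow_pos
    have : m - (e+1) < m := by omega
    have := hb _ this
    positivity


lemma MN_self (m : ℕ) (b : ℕ → ℕ) : MN m b m = 1 := by
  unfold MN; rw [Mz_self]; rfl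


lemma diff_update (v : ℕ → ℂ) (l j : ℕ) :
    Differentiable ℂ (fun x : ℂ => Function.update v l x j) := by
  by_cases h : j = l
  · subst h; simp only [Function.update_self]; exact differentiable_id
  · simp only [Function.update_of_ne h]; exact differentiable_const _


lemma diff_chain_update (m : ℕ) (b : ℕ → ℕ) (v : ℕ → ℂ) (l : ℕ) :
    Differentiable ℂ (fun x : ℂ => chainP m b (Function.update v l x)) := by
  unfold chainP
  apply Differentiable.add
  · apply Differentiable.fun_sum
    intro k hk
    exact (((differentiable_const _).mul ((diff_update v l k).pow _)).mul (diff_update v l (k+1)))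
  · exact (differentiable_const _).mul ((diff_update v l (m-1)).pow _)


lemma pd_chain (m : ℕ) (b : ℕ → ℕ) (v : ℕ → ℂ) (l : ℕ) (hl : l < m) :
    pd (chainP m b) l v
      = (if l = 0 then 0 else (-1:ℂ)^l * v (l-1) ^ b (l-1))
        + (-1:ℂ)^(l+1) * (b l) * v l ^ (b l - 1) * (if l + 1 < m then v (l+1) else 1) := by
  have hterm : ∀ k, k ∈ Finset.range (m-1) →
      deriv (fun x => (-1:ℂ)^(k+1) * Function.update v l x k ^ b k
          * Function.update v l x (k+1)) (v l)
        = (if k = l then (-1:ℂ)^(k+1) * (b k) * v l ^ (b k - 1) * v (k+1) else 0)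
          + (if k + 1 = l then (-1:ℂ)^(k+1) * v k ^ b k else 0) := by
    intro k hk
    by_cases hkl : k = l
    · subst hkl
      have hne : k + 1 ≠ k := by omega
      simp only [Function.update_self, Function.update_of_ne hne]
      rw [deriv_mul_const_field, deriv_const_mul_field, deriv_pow_field]
      simp only [eq_self_iff_true, if_true, if_neg hne]
      ring
    · by_cases hk1 : k + 1 = l
      · subst hk1
        have hne : k ≠ k + 1 := by omega
        simp only [Function.update_self, Function.update_of_ne hne]
        rw [deriv_const_mul_field]
        simp only [deriv_id'', mul_one, if_neg hne, eq_self_iff_true, if_true]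
        ring
      · simp only [Function.update_of_ne hkl, Function.update_of_ne hk1]
        rw [deriv_const]
        simp [hkl, hk1]
  have hdiffsum : ∀ k, k ∈ Finset.range (m-1) → DifferentiableAt ℂ
      (fun x => (-1:ℂ)^(k+1) * Function.update v l x k ^ b k
          * Function.update v l x (k+1)) (v l) := by
    intro k _
    exact (((differentiable_const _).mul ((diff_update v l k).pow _)).mul
      (diff_update v l (k+1))).differentiableAt
  have hlast : deriv (fun x => (-1:ℂ)^m * Function.update v l x (m-1) ^ b (m-1)) (v l)
      = if m - 1 = l then (-1:ℂ)^m * (b (m-1)) * v l ^ (b (m-1) - 1) else 0 := by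
    by_cases h : m - 1 = l
    · subst h
      simp only [Function.update_self]
      rw [deriv_const_mul_field, deriv_pow_field]
      simp only [eq_self_iff_true, if_true]
      ring
    · simp only [Function.update_of_ne h]
      rw [deriv_const]
      simp [h]
  have step : pd (chainP m b) l v
      = (∑ k ∈ Finset.range (m-1),
          ((if k = l then (-1:ℂ)^(k+1) * (b k) * v l ^ (b k - 1) * v (k+1) else 0)
          + (if k + 1 = l then (-1:ℂ)^(k+1) * v k ^ b k else 0)))
        + (if m - 1 = l then (-1:ℂ)^m * (b (m-1)) * v l ^ (b (m-1) - 1) else 0) := by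
    unfold pd chainP
    rw [deriv_fun_add ((Differentiable.fun_sum (fun k _ =>
        (((differentiable_const _).fun_mul ((diff_update v l k).fun_pow _)).fun_mul
          (diff_update v l (k+1))))).differentiableAt)
      (((differentiable_const _).fun_mul ((diff_update v l (m-1)).fun_pow _)).differentiableAt)]
    rw [deriv_fun_sum hdiffsum, Finset.sum_congr rfl hterm, hlast]
  rw [step, Finset.sum_add_distrib, Finset.sum_ite_eq' (Finset.range (m-1)) l]
  have hsecond : (∑ k ∈ Finset.range (m-1),
      (if k + 1 = l then (-1:ℂ)^(k+1) * v k ^ b k else 0))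
      = if l = 0 then 0 else (-1:ℂ)^l * v (l-1) ^ b (l-1) := by
    rcases Nat.eq_zero_or_pos l with h0 | hpos
    · subst h0
      simp
    · obtain ⟨j, rfl⟩ : ∃ j, l = j + 1 := ⟨l - 1, by omega⟩
      simp only [add_left_inj]
      rw [Finset.sum_ite_eq' (Finset.range (m-1)) j]
      have : j ∈ Finset.range (m-1) := by simp; omega
      simp [this]
  rw [hsecond]
  by_cases hlt : l + 1 < m
  · have h1 : l ∈ Finset.range (m-1) := by simp; omega
    have h2 : m - 1 ≠ l := by omega
    simp only [if_pos h1, if_neg h2, if_pos hlt]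
    ring
  · have hm : l = m - 1 := by omega
    have h1 : l ∉ Finset.range (m-1) := by simp; omega
    have h2 : m - 1 = l := by omega
    have h3 : (-1:ℂ)^m = (-1:ℂ)^(l+1) := by rw [show m = l + 1 by omega]
    simp only [if_neg h1, if_pos h2, if_neg hlt, h3]
    rw [hm]
    ring


lemma update_comp (z : ℕ → ℂ) (l : ℕ) (x : ℂ) :
    (fun i => Function.update z (l+1) x (i+1)) = Function.update (fun i => z (i+1)) l x := by
  funext i
  rcases eq_or_ne i l with rfl | h
  · simp
  · rw [Function.update_of_ne (by omega : i + 1 ≠ l + 1), Function.update_of_ne h]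


lemma pd_gMap (n : ℕ) (a : ℕ → ℕ) (t s : ℂ) (z : ℕ → ℂ) (l : ℕ) (hl : l + 1 < n) :
    pd (gMap n a t s) (l+1) z
      = (if l = 0 then -s - t * z 0 ^ a 0 else 0)
        - pd (chainP (n-1) (fun i => a (i+1))) l (fun i => z (i+1)) := by
  unfold pd gMap
  simp only [update_comp z l]
  have h0 : ∀ x : ℂ, Function.update z (l+1) x 0 = z 0 :=
    fun x => Function.update_of_ne (by omega) _ _
  simp only [h0]
  rcases Nat.eq_zero_or_pos l with rfl | hpos
  · simp only [Function.update_self, eq_self_iff_true, if_true]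
    have dmul : ∀ c : ℂ, Differentiable ℂ (fun x : ℂ => c * x) := fun c => by
      simpa using differentiable_id.const_mul c
    have d1 : Differentiable ℂ (fun x : ℂ => z 0 - s * x) := (differentiable_const _).sub (dmul s)
    have d2 : Differentiable ℂ (fun x : ℂ => z 0 - s * x - t * z 0 ^ a 0 * x) := d1.sub (dmul _)
    rw [deriv_fun_sub (d2 _) ((diff_chain_update _ _ _ _) _),
        deriv_fun_sub (d1 _) ((dmul _) _),
        deriv_fun_sub ((differentiable_const _) _) ((dmul s) _),
        deriv_const, deriv_const_mul_field, deriv_const_mul_field, deriv_id'']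
    ring_nf
  · have h1 : ∀ x : ℂ, Function.update z (l+1) x 1 = z 1 :=
      fun x => Function.update_of_ne (by omega) _ _
    simp only [h1, if_neg (by omega : ¬ l = 0)]
    rw [deriv_fun_sub ((differentiable_const _) _) ((diff_chain_update _ _ _ _) _), deriv_const]





variable (m : ℕ) (b : ℕ → ℕ)

/-- product of the tail `b k ⋯ b (m-1)`. -/


lemma Gclaim (m : ℕ) (b : ℕ → ℕ) (hb : ∀ i < m, 2 ≤ b i) (V : ℕ → ℂ)
    (hVge : ∀ i, m ≤ i → V i = 1)
    (eql : ∀ l, 1 ≤ l → l < m → V (l-1) ^ b (l-1) = (b l : ℂ) * V l ^ (b l - 1) * V (l+1)) :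
    ∀ e l, l + e = m → 1 ≤ l →
      (Cr m b e : ℂ) * V l ^ (MN m b l) = V (l-1) ^ (b (l-1) * MN m b (l+1)) := by
  intro e
  induction e with
  | zero =>
    intro l hl _
    obtain rfl : l = m := by omega
    rw [MN_top, MN_self, hVge l le_rfl]
    simp [Cr]
  | succ e ih =>
    intro l hl hl1
    have hm : 1 ≤ m := by omega
    have hlm : l < m := by omega
    have ihl := ih (l+1) (by omega) (by omega)
    have hl1' : l + 1 - 1 = l := by omega
    rw [hl1'] at ihl
    have hCe : (0:ℚ) < Cr m b e := Cr_pos m b hm hb e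
    have hCr : (Cr m b (e+1) : ℚ) = (b l : ℚ) ^ (MN m b (l+1)) / Cr m b e := by
      rw [Cr, show m - (e+1) = l by omega, show m - e = l + 1 by omega]
    have hq : (Cr m b e) * (Cr m b (e+1)) = (b l : ℚ) ^ (MN m b (l+1)) := by
      rw [hCr]; field_simp
    have h1 : (Cr m b e : ℂ) * (Cr m b (e+1) : ℂ) = (b l : ℂ) ^ (MN m b (l+1)) := by
      exact_mod_cast congrArg (fun q : ℚ => (q : ℂ)) hq
    have hCene : (Cr m b e : ℂ) ≠ 0 := by
      exact_mod_cast ne_of_gt hCe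
    apply mul_left_cancel₀ hCene
    calc (Cr m b e : ℂ) * ((Cr m b (e+1) : ℂ) * V l ^ (MN m b l))
        = ((Cr m b e : ℂ) * (Cr m b (e+1) : ℂ)) * V l ^ (MN m b l) := by ring
      _ = (b l : ℂ) ^ (MN m b (l+1)) * V l ^ (MN m b l) := by rw [h1]
      _ = (b l : ℂ) ^ (MN m b (l+1))
            * (V l ^ ((b l - 1) * MN m b (l+1)) * V l ^ (b l * MN m b (l+2))) := by
          rw [← pow_add, ← MN_split m b hb hlm]
      _ = (b l : ℂ) ^ (MN m b (l+1))
            * (V l ^ ((b l - 1) * MN m b (l+1)) * ((Cr m b e : ℂ) * V (l+1) ^ (MN m b (l+1)))) := by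
          rw [ihl]
      _ = (Cr m b e : ℂ) * (((b l : ℂ) * V l ^ (b l - 1) * V (l+1)) ^ (MN m b (l+1))) := by
          rw [mul_pow, mul_pow, ← pow_mul]
          ring
      _ = (Cr m b e : ℂ) * ((V (l-1) ^ b (l-1)) ^ (MN m b (l+1))) := by
          rw [← eql l hl1 hlm]
      _ = (Cr m b e : ℂ) * V (l-1) ^ (b (l-1) * MN m b (l+1)) := by
          rw [← pow_mul]


lemma Mz_expand (m : ℕ) (b : ℕ → ℕ) :
    Mz m b 0 = (∏ i ∈ Finset.Ico 0 m, (b i : ℤ))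
      + ∑ k ∈ Finset.range m, (-1:ℤ)^(k+1) * ∏ i ∈ Finset.Ico (k+1) m, (b i : ℤ) := by
  unfold Mz
  rw [show Finset.Ico 0 (m+1) = Finset.range (m+1) from Nat.Ico_zero_eq_range (m+1),
      Finset.sum_range_succ']
  simp only [Nat.sub_zero, pow_zero, one_mul, Nat.add_sub_cancel]
  ring


lemma muZ_eq_Mz (m : ℕ) (b : ℕ → ℕ) : muZ m b = Mz m b 0 := by
  unfold muZ Mz
  rw [Finset.range_eq_Ico]
  exact Finset.sum_congr rfl (fun j _ => by rw [Nat.sub_zero])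

end St10

open St10 Finset in
/-- There is a positive rational `c_a` depending only on `a` such that
for all `t, s` and every `z` with `∂g_a^{t,s}/∂z_j(z) = 0` for `2 ≤ j ≤ n`, setting
`y := g_a^{t,s}(z)`, one has `c_a (s + t z_1^{a_1})^{d(−a)} = (z_1 − y)^{μ(−a)}`. -/
theorem stmt_10 (n : ℕ) (hn : 2 ≤ n) (a : ℕ → ℕ) (ha : ∀ i < n, 2 ≤ a i) :
    ∃ c : ℚ, 0 < c ∧ ∀ t s : ℂ, ∀ z : ℕ → ℂ,
      (∀ j : ℕ, 1 ≤ j → j < n → pd (gMap n a t s) j z = 0) →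
      (c : ℂ) * (s + t * z 0 ^ a 0) ^ (dd (n - 1) (fun i => a (i + 1)))
        = (z 0 - gMap n a t s z) ^ (muZ (n - 1) (fun i => a (i + 1))) := by
  set m := n - 1 with hmdef
  set b : ℕ → ℕ := fun i => a (i + 1) with hbdef
  have hm : 1 ≤ m := by omega
  have hb : ∀ i < m, 2 ≤ b i := fun i hi => ha (i+1) (by omega)
  have hb' : ∀ i < m, 1 ≤ b i := fun i hi => by have := hb i hi; omega
  set N0 := MN m b 0 with hN0def
  set N1 := MN m b 1 with hN1def
  set D0 := D m b 0 with hD0def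
  set Cd := Cr m b (m-1) with hCddef
  have hN0 : 1 ≤ N0 := MN_pos m b hb (by omega)
  have hD0 : 1 ≤ D0 := D_pos m b hb' 0
  have hCd : (0:ℚ) < Cd := Cr_pos m b hm hb (m-1)
  have hb0 : 2 ≤ b 0 := hb 0 (by omega)
  refine ⟨((N0:ℚ)^N0 * Cd) / ((b 0:ℚ)^N1 * (D0:ℚ)^N0), by positivity, ?_⟩
  intro t s z hz
  set w := s + t * z 0 ^ a 0 with hwdef
  set V : ℕ → ℂ := fun i => if i < m then z (i+1) else 1 with hVdef
  have hVlt : ∀ i, i < m → V i = z (i+1) := fun i h => if_pos h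
  have hVge : ∀ i, m ≤ i → V i = 1 := fun i h => if_neg (by omega)
  -- raw critical point equations
  have hraw : ∀ l, l < m →
      (if l = 0 then -s - t * z 0 ^ a 0 else 0)
        = (if l = 0 then 0 else (-1:ℂ)^l * z (l-1+1) ^ b (l-1))
          + (-1:ℂ)^(l+1) * (b l) * z (l+1) ^ (b l - 1)
            * (if l + 1 < m then z (l+1+1) else 1) := by
    intro l hl
    have h := hz (l+1) (by omega) (by omega)
    rw [pd_gMap n a t s z l (by omega)] at h
    have h2 := sub_eq_zero.mp h
    rw [← hmdef, ← hbdef] at h2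
    rw [pd_chain m b (fun i => z (i+1)) l hl] at h2
    beta_reduce at h2
    exact h2
  -- the two structured equations
  have eq0 : w = (b 0 : ℂ) * V 0 ^ (b 0 - 1) * V 1 := by
    have h := hraw 0 (by omega)
    have hv0 : V 0 = z 1 := hVlt 0 hm
    have hv1 : V 1 = if 1 < m then z 2 else 1 := by rw [hVdef]
    simp only [eq_self_iff_true, if_true] at h
    rw [hwdef, hv0, hv1]
    rcases Nat.lt_or_ge (0+1) m with h1 | h1
    · rw [if_pos h1] at h
      rw [if_pos (by omega : 1 < m)]
      norm_num at h ⊢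
      linear_combination -h
    · rw [if_neg (by omega : ¬ 0+1 < m)] at h
      rw [if_neg (by omega : ¬ 1 < m)]
      norm_num at h ⊢
      linear_combination -h
  have eql : ∀ l, 1 ≤ l → l < m →
      V (l-1) ^ b (l-1) = (b l : ℂ) * V l ^ (b l - 1) * V (l+1) := by
    intro l h1 hl
    have h := hraw l hl
    rw [if_neg (by omega : ¬ l = 0), if_neg (by omega : ¬ l = 0)] at h
    rw [show l - 1 + 1 = l by omega] at h
    have hvl1 : V (l-1) = z (l-1+1) := hVlt (l-1) (by omega)
    rw [show l - 1 + 1 = l by omega] at hvl1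
    have hvl : V l = z (l+1) := hVlt l hl
    have hvl2 : V (l+1) = if l + 1 < m then z (l+1+1) else 1 := by rw [hVdef]
    rw [hvl1, hvl, hvl2]
    rw [pow_succ] at h
    have h2 : (-1:ℂ)^l * (z l ^ b (l-1)
        - (b l : ℂ) * z (l+1) ^ (b l - 1) * (if l + 1 < m then z (l+1+1) else 1)) = 0 := by
      linear_combination -h
    rcases mul_eq_zero.mp h2 with h3 | h3
    · exact absurd h3 (pow_ne_zero l (by norm_num))
    · linear_combination h3
  -- chain as a uniform sum over `V`
  have hchain : chainP m b (fun i => z (i+1))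
      = ∑ k ∈ Finset.range m, (-1:ℂ)^(k+1) * V k ^ b k * V (k+1) := by
    obtain ⟨M, hM⟩ : ∃ M, m = M + 1 := ⟨m - 1, by omega⟩
    rw [hM]
    unfold chainP
    rw [Finset.sum_range_succ, show M + 1 - 1 = M by omega]
    congr 1
    · apply Finset.sum_congr rfl
      intro k hk
      simp only [Finset.mem_range] at hk
      rw [hVlt k (by omega), hVlt (k+1) (by omega)]
    · rw [hVlt M (by omega), hVge (M+1) (by omega), mul_one]
  -- the partial products kill the sum terms
  have hP : ∀ k, k < m →
      (∏ i ∈ Finset.range (k+1), (b i : ℂ)) * (V k ^ b k * V (k+1)) = w * V 0 := by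
    intro k
    induction k with
    | zero =>
      intro _
      rw [Finset.prod_range_one]
      rw [show b 0 = (b 0 - 1) + 1 by omega, pow_succ]
      rw [show b 0 - 1 + 1 = b 0 by omega] at *
      simp only [zero_add]
      linear_combination (-(V 0)) * eq0
    | succ k ih =>
      intro hk
      have ihh := ih (by omega)
      have e := eql (k+1) (by omega) hk
      have hbk1 : 2 ≤ b (k+1) := hb (k+1) hk
      rw [show k + 1 - 1 = k by omega] at e
      rw [Finset.prod_range_succ]
      have hps : V (k+1) ^ b (k+1) = V (k+1) ^ (b (k+1) - 1) * V (k+1) := by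
        conv_lhs => rw [show b (k+1) = (b (k+1) - 1) + 1 by omega, pow_succ]
      rw [hps]
      linear_combination (-(∏ i ∈ Finset.range (k+1), (b i : ℂ)) * V (k+1)) * e + ihh
  -- key identity :  D0 * (z0 - y) = N0 * (w * V0)
  have key1 : (D0 : ℂ) * (z 0 - gMap n a t s z) = (N0 : ℂ) * (w * V 0) := by
    have hy : z 0 - gMap n a t s z
        = w * V 0 + ∑ k ∈ Finset.range m, (-1:ℂ)^(k+1) * V k ^ b k * V (k+1) := by
      unfold gMap
      rw [← hmdef, ← hbdef, hchain, hVlt 0 hm]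
      rw [hwdef]
      ring
    have hDsplit : ∀ k, k < m →
        (D0 : ℂ) = (∏ i ∈ Finset.range (k+1), (b i : ℂ)) * (∏ i ∈ Finset.Ico (k+1) m, (b i : ℂ)) := by
      intro k hk
      rw [hD0def]
      have : (D m b 0 : ℤ) = ∏ i ∈ Finset.Ico 0 m, (b i : ℤ) := D_cast m b 0
      have h2 : ((D m b 0 : ℤ) : ℂ) = ∏ i ∈ Finset.Ico 0 m, (b i : ℂ) := by
        rw [this]; push_cast; rfl
      rw [show ((D m b 0 : ℕ) : ℂ) = ((D m b 0 : ℤ) : ℂ) by push_cast; rfl, h2]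
      rw [show Finset.range (k+1) = Finset.Ico 0 (k+1) from (Nat.Ico_zero_eq_range (k+1)).symm]
      rw [Finset.prod_Ico_consecutive _ (by omega : 0 ≤ k+1) (by omega : k+1 ≤ m)]
    have hsum : (D0 : ℂ) * (∑ k ∈ Finset.range m, (-1:ℂ)^(k+1) * V k ^ b k * V (k+1))
        = (∑ k ∈ Finset.range m, (-1:ℂ)^(k+1) * ∏ i ∈ Finset.Ico (k+1) m, (b i : ℂ)) * (w * V 0) := by
      rw [Finset.mul_sum, Finset.sum_mul]
      apply Finset.sum_congr rfl
      intro k hk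
      simp only [Finset.mem_range] at hk
      rw [hDsplit k hk]
      calc (∏ i ∈ Finset.range (k+1), (b i : ℂ)) * (∏ i ∈ Finset.Ico (k+1) m, (b i : ℂ))
            * ((-1:ℂ)^(k+1) * V k ^ b k * V (k+1))
          = ((-1:ℂ)^(k+1) * ∏ i ∈ Finset.Ico (k+1) m, (b i : ℂ))
            * ((∏ i ∈ Finset.range (k+1), (b i : ℂ)) * (V k ^ b k * V (k+1))) := by ring
        _ = ((-1:ℂ)^(k+1) * ∏ i ∈ Finset.Ico (k+1) m, (b i : ℂ)) * (w * V 0) := by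
            rw [hP k hk]
    have hscalar : (N0 : ℂ)
        = (∏ i ∈ Finset.Ico 0 m, (b i : ℂ))
          + ∑ k ∈ Finset.range m, (-1:ℂ)^(k+1) * ∏ i ∈ Finset.Ico (k+1) m, (b i : ℂ) := by
      have h1 : (N0 : ℤ) = Mz m b 0 := by rw [hN0def]; exact MN_cast m b hb (by omega)
      have h2 := Mz_expand m b
      have h3 : ((N0 : ℤ) : ℂ) = ((Mz m b 0 : ℤ) : ℂ) := by rw [h1]
      rw [h2] at h3
      push_cast at h3 ⊢
      convert h3 using 2
    calc (D0 : ℂ) * (z 0 - gMap n a t s z)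
        = (D0:ℂ) * (w * V 0) + (D0:ℂ) * (∑ k ∈ Finset.range m, (-1:ℂ)^(k+1) * V k ^ b k * V (k+1)) := by
          rw [hy]; ring
      _ = (D0:ℂ) * (w * V 0)
          + (∑ k ∈ Finset.range m, (-1:ℂ)^(k+1) * ∏ i ∈ Finset.Ico (k+1) m, (b i : ℂ)) * (w * V 0) := by
          rw [hsum]
      _ = ((∏ i ∈ Finset.Ico 0 m, (b i : ℂ))
          + ∑ k ∈ Finset.range m, (-1:ℂ)^(k+1) * ∏ i ∈ Finset.Ico (k+1) m, (b i : ℂ)) * (w * V 0) := by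
          have hD0c : (D0 : ℂ) = ∏ i ∈ Finset.Ico 0 m, (b i : ℂ) := by
            rw [hD0def, show ((D m b 0 : ℕ) : ℂ) = ((D m b 0 : ℤ) : ℂ) by push_cast; rfl,
              D_cast m b 0]
            push_cast; rfl
          rw [hD0c]; ring
      _ = (N0 : ℂ) * (w * V 0) := by rw [← hscalar]
  -- power identity from the downward induction
  have g1 := Gclaim m b hb V hVge eql (m-1) 1 (by omega) le_rfl
  rw [show (1:ℕ) - 1 = 0 from rfl] at g1
  have key2 : (Cd : ℂ) * w ^ N1 = (b 0 : ℂ)^N1 * V 0 ^ N0 := by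
    calc (Cd:ℂ) * w ^ N1 = (Cd:ℂ) * ((b 0:ℂ) * V 0 ^ (b 0 - 1) * V 1) ^ N1 := by rw [← eq0]
      _ = (b 0:ℂ)^N1 * (V 0 ^ ((b 0 - 1) * N1) * ((Cd:ℂ) * V 1 ^ N1)) := by
          rw [mul_pow, mul_pow, ← pow_mul]; ring
      _ = (b 0:ℂ)^N1 * (V 0 ^ ((b 0 - 1) * N1) * V 0 ^ (b 0 * MN m b 2)) := by rw [g1]
      _ = (b 0:ℂ)^N1 * V 0 ^ N0 := by
          rw [← pow_add, hN0def, hN1def, ← MN_split m b hb (by omega : 0 < m)]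
  -- rewrite the goal
  have hdd : dd m b = D0 := by
    rw [hD0def]
    unfold dd D
    rw [Nat.Ico_zero_eq_range m]
  have hmu : muZ m b = ((N0 : ℕ) : ℤ) := by
    rw [muZ_eq_Mz, hN0def, MN_cast m b hb (Nat.zero_le m)]
  rw [hdd, hmu, zpow_natCast]
  -- final computation
  have E : ((b 0:ℂ)^N1 * (D0:ℂ)^N0) * (z 0 - gMap n a t s z) ^ N0
      = (N0:ℂ)^N0 * (Cd:ℂ) * w ^ D0 := by
    calc ((b 0:ℂ)^N1 * (D0:ℂ)^N0) * (z 0 - gMap n a t s z) ^ N0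
        = (b 0:ℂ)^N1 * ((D0:ℂ) * (z 0 - gMap n a t s z)) ^ N0 := by rw [mul_pow]; ring
      _ = (b 0:ℂ)^N1 * ((N0:ℂ) * (w * V 0)) ^ N0 := by rw [key1]
      _ = (N0:ℂ)^N0 * (w ^ N0 * ((b 0:ℂ)^N1 * V 0 ^ N0)) := by rw [mul_pow, mul_pow]; ring
      _ = (N0:ℂ)^N0 * (w ^ N0 * ((Cd:ℂ) * w ^ N1)) := by rw [← key2]
      _ = (N0:ℂ)^N0 * (Cd:ℂ) * w ^ (N0 + N1) := by rw [pow_add]; ring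
      _ = (N0:ℂ)^N0 * (Cd:ℂ) * w ^ D0 := by
          rw [hN0def, hN1def, hD0def, MN_add m b hb (Nat.zero_le m)]
  have hQne : ((b 0:ℂ)^N1 * (D0:ℂ)^N0) ≠ 0 := by
    have h1 : (b 0:ℂ) ≠ 0 := Nat.cast_ne_zero.mpr (by omega)
    have h2 : (D0:ℂ) ≠ 0 := Nat.cast_ne_zero.mpr (by omega)
    exact mul_ne_zero (pow_ne_zero _ h1) (pow_ne_zero _ h2)
  apply mul_left_cancel₀ hQne
  have hq2 : ((b 0:ℚ)^N1 * (D0:ℚ)^N0) * (((N0:ℚ)^N0 * Cd) / ((b 0:ℚ)^N1 * (D0:ℚ)^N0))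
      = (N0:ℚ)^N0 * Cd := by
    have hQq : ((b 0:ℚ)^N1 * (D0:ℚ)^N0) ≠ 0 := by
      have h1 : (b 0:ℚ) ≠ 0 := Nat.cast_ne_zero.mpr (by omega)
      have h2 : (D0:ℚ) ≠ 0 := Nat.cast_ne_zero.mpr (by omega)
      positivity
    field_simp
  have hsc := congrArg (fun q : ℚ => (q : ℂ)) hq2
  simp only [Rat.cast_mul, Rat.cast_pow, Rat.cast_natCast] at hsc
  linear_combination (w ^ D0) * hsc - E
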